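/- Let d > 2 and let b ∈ ℂ^d be the unit vector with b₁ = b₂ = 1/√2 and all other entries 0. Then for every c : Fin d → ℂ with Σ_k c_k = d and every θ ∈ ℝ, the circulant matrix M with entries M_{jk} = c_{(j−k) mod d}/d satisfies M·b ≠ e^{iθ} · e_{d−1}, where e_{d−1} is the standard basis vector supported at index d−1. Hence the Z_d phase gate sending b to |d−1⟩ cannot be realized by any Λ_X phase gate, even up to a global phase. -/

import Mathlib

open scoped Matrix
open Finset

/-- The circulant matrix Λ_X(c) with entries M_{jk} = c_{(j−k) mod d} / d
    (subtraction in `Fin d` is subtraction mod d). -/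
noncomputable def lambdaX (d : ℕ) (c : Fin d → ℂ) : Matrix (Fin d) (Fin d) ℂ :=
  Matrix.of fun j k => c (j - k) / d

/-- Let d > 2 and b be the unit vector with b₁ = b₂ = 1/√2 and all other entries 0.
    For every c with Σ c_k = d and every θ, the circulant matrix Λ_X(c) does not map
    b to e^{iθ}·e_{d−1}: the Z_d gate sending b to |d−1⟩ is not realizable by any
    Λ_X phase gate, even up to a global phase. -/
theorem Zd_phase_gate_not_realizable_by_lambdaX (d : ℕ) (hd : 2 < d)
    (c : Fin d → ℂ) (hc : (∑ k, c k) = (d : ℂ)) (θ : ℝ) :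
    (lambdaX d c).mulVec
        (fun i => if (i : ℕ) = 1 ∨ (i : ℕ) = 2 then ((1 / Real.sqrt 2 : ℝ) : ℂ) else 0)
      ≠ fun (j : Fin d) => if (j : ℕ) = d - 1 then Complex.exp (θ * Complex.I) else 0 := by
  intro h
  set r : ℂ := ((1 / Real.sqrt 2 : ℝ) : ℂ) with hr
  set o : Fin d := ⟨1, by omega⟩
  set t : Fin d := ⟨2, by omega⟩
  have hot : o ≠ t := by simp [o, t, Fin.ext_iff]
  have key : ∀ j : Fin d, (c (j - o) / d * r + c (j - t) / d * r)
      = (if (j : ℕ) = d - 1 then Complex.exp (θ * Complex.I) else 0) := by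
    intro j
    have hj := congrFun h j
    simp only [lambdaX, Matrix.mulVec, dotProduct, Matrix.of_apply] at hj
    rw [← hj]
    have hmem : ∀ k : Fin d, ((k : ℕ) = 1 ∨ (k : ℕ) = 2) ↔ k ∈ ({o, t} : Finset (Fin d)) := by
      intro k; simp [o, t, Fin.ext_iff]
    calc (c (j - o) / d * r + c (j - t) / d * r)
        = ∑ k ∈ ({o, t} : Finset (Fin d)), c (j - k) / d * r := by
          rw [Finset.sum_pair hot]
      _ = ∑ k : Fin d, if k ∈ ({o, t} : Finset (Fin d)) then c (j - k) / d * r else 0 := by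
          rw [Finset.sum_ite_mem, Finset.univ_inter]
      _ = ∑ k : Fin d, c (j - k) / d * (if (k : ℕ) = 1 ∨ (k : ℕ) = 2 then r else 0) := by
          simp only [mul_ite, mul_zero]
          exact Finset.sum_congr rfl fun k _ => if_congr (hmem k).symm rfl rfl
  -- the index d-1
  set j0 : Fin d := ⟨d - 1, by omega⟩
  have hdC : (d : ℂ) ≠ 0 := Nat.cast_ne_zero.mpr (by omega)
  haveI : NeZero d := ⟨by omega⟩
  have hrne : r ≠ 0 := by
    rw [hr]; simp only [ne_eq, Complex.ofReal_eq_zero]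
    positivity
  -- g j = 0 for j ≠ j0
  have hzero : ∀ j : Fin d, j ≠ j0 → c (j - o) + c (j - t) = 0 := by
    intro j hj
    have hk := key j
    rw [if_neg (by simpa [j0, Fin.ext_iff] using hj)] at hk
    have : (c (j - o) + c (j - t)) * (r / d) = 0 := by
      field_simp at hk ⊢
      linear_combination hk
    rcases mul_eq_zero.mp this with h1 | h2
    · exact h1
    · exact absurd h2 (div_ne_zero hrne hdC)
  have hsum : ∑ j : Fin d, (c (j - o) + c (j - t)) = 2 * d := by
    rw [Finset.sum_add_distrib]
    rw [show (∑ x : Fin d, c (x - o)) = ∑ x, c x from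
        Fintype.sum_equiv (Equiv.subRight o) _ _ (fun x => rfl),
      show (∑ x : Fin d, c (x - t)) = ∑ x, c x from
        Fintype.sum_equiv (Equiv.subRight t) _ _ (fun x => rfl), hc]
    ring
  have hg0 : c (j0 - o) + c (j0 - t) = 2 * d := by
    rw [← hsum]
    exact (Finset.sum_eq_single_of_mem j0 (Finset.mem_univ _)
      (fun b _ hb => hzero b hb)).symm
  have hkey0 := key j0
  rw [if_pos rfl] at hkey0
  have habs : ‖c (j0 - o) / d * r + c (j0 - t) / d * r‖ = 1 := by
    rw [hkey0, Complex.norm_exp_ofReal_mul_I]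
  have hval : c (j0 - o) / d * r + c (j0 - t) / d * r = 2 * r := by
    have : (c (j0 - o) + c (j0 - t)) / d * r = 2 * r := by
      rw [hg0]; field_simp
    rw [← this]; ring
  rw [hval] at habs
  have hs2 : (0:ℝ) < Real.sqrt 2 := Real.sqrt_pos.mpr (by norm_num)
  have hmul : Real.sqrt 2 * Real.sqrt 2 = 2 := Real.mul_self_sqrt (by norm_num)
  have habs2 : ‖2 * r‖ = Real.sqrt 2 := by
    rw [hr, norm_mul, Complex.norm_two, Complex.norm_real, Real.norm_eq_abs,
      abs_of_nonneg (by positivity : (0:ℝ) ≤ 1 / Real.sqrt 2)]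
    field_simp
    nlinarith
  rw [habs2] at habs
  have hlt : (1:ℝ) < Real.sqrt 2 := by
    nlinarith
  linarith
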